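/- Let A ∈ ℝ^{n×n} be a symmetric M-matrix (positive definite with nonpositive off-diagonal entries). Then the set function K ↦ Tr(A[K]⁻¹) on subsets K ⊆ {1,…,n} is supermodular: for all subsets J, K ⊆ {1,…,n}, Tr(A[K]⁻¹) + Tr(A[J]⁻¹) ≤ Tr(A[K∪J]⁻¹) + Tr(A[K∩J]⁻¹). (Every principal submatrix A[K] with K nonempty is positive definite, hence invertible; Tr(A[∅]⁻¹) is taken to be 0.) -/

import Mathlib

open Matrix
set_option linter.unusedSectionVars false

/-- The principal submatrix `A[K]` of `A` with rows and columns indexed by the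
subset `K`. -/
def principalSub {n : ℕ} (A : Matrix (Fin n) (Fin n) ℝ) (K : Finset (Fin n)) :
    Matrix {i : Fin n // i ∈ K} {i : Fin n // i ∈ K} ℝ :=
  A.submatrix Subtype.val Subtype.val



section Generic
variable {m : Type*} [Fintype m] [DecidableEq m]

/-- Inverse of a symmetric M-matrix is entrywise nonnegative. -/
lemma Mmat_inv_nonneg (B : Matrix m m ℝ) (hpd : B.PosDef)
    (hoff : ∀ i j, i ≠ j → B i j ≤ 0) (i j : m) : 0 ≤ B⁻¹ i j := by
  have hBI : B * B⁻¹ = 1 := Matrix.mul_nonsing_inv B hpd.det_pos.ne'.isUnit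
  set x : m → ℝ := fun k => B⁻¹ k j with hx
  have hBx : B *ᵥ x = fun k => (1 : Matrix m m ℝ) k j := by
    funext k
    simp only [mulVec, dotProduct, hx]
    rw [← hBI]
    simp [Matrix.mul_apply]
  set p : m → ℝ := fun k => max (x k) 0 with hp
  set q : m → ℝ := fun k => max (-(x k)) 0 with hq
  have hpq : ∀ k, p k - q k = x k := fun k => by
    simp only [hp, hq]; rcases le_total (x k) 0 with h | h
    · rw [max_eq_right h, max_eq_left (by linarith)]; ring
    · rw [max_eq_left h, max_eq_right (by linarith)]; ring
  have hpq0 : ∀ k, p k * q k = 0 := fun k => by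
    simp only [hp, hq]; rcases le_total (x k) 0 with h | h
    · rw [max_eq_right h]; ring
    · rw [max_eq_right (by linarith : -(x k) ≤ 0)]; ring
  have hp0 : ∀ k, 0 ≤ p k := fun k => le_max_right _ _
  have hq0 : ∀ k, 0 ≤ q k := fun k => le_max_right _ _
  have key : q ⬝ᵥ (B *ᵥ q) ≤ 0 := by
    have hqx : q ⬝ᵥ (B *ᵥ x) = q j := by
      rw [hBx]
      simp [dotProduct, Matrix.one_apply]
    have hqp : q ⬝ᵥ (B *ᵥ p) ≤ 0 := by
      simp only [dotProduct, mulVec]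
      refine Finset.sum_nonpos fun k _ => ?_
      rw [Finset.mul_sum]
      refine Finset.sum_nonpos fun l _ => ?_
      rcases eq_or_ne k l with rfl | hkl
      · calc q k * (B k k * p k) = B k k * (p k * q k) := by ring
          _ ≤ 0 := by rw [hpq0 k, mul_zero]
      · calc q k * (B k l * p l) = (-B k l) * -(q k * p l) := by ring
          _ ≤ 0 := mul_nonpos_of_nonneg_of_nonpos (by linarith [hoff k l hkl])
              (neg_nonpos_of_nonneg (mul_nonneg (hq0 k) (hp0 l)))
    have hqpx : q = p - x := by funext k; simp [← hpq k]
    calc q ⬝ᵥ (B *ᵥ q) = q ⬝ᵥ (B *ᵥ p) - q ⬝ᵥ (B *ᵥ x) := by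
          rw [hqpx, mulVec_sub, dotProduct_sub]
      _ ≤ 0 - q j := by rw [hqx]; exact sub_le_sub_right hqp _
      _ ≤ 0 := by have := hq0 j; linarith
  have hqzero : q = 0 := by
    by_contra hne
    have := hpd.dotProduct_mulVec_pos hne
    simp only [star_trivial] at this
    exact absurd key (not_le.2 this)
  have h0 : 0 ≤ x i := by rw [← hpq i, hqzero]; simpa using hp0 i
  exact h0
end Generic



section Helpers
variable {m : Type*} [Fintype m] [DecidableEq m]

lemma colU_mul_rowU (x y : m → ℝ) : replicateCol Unit x * replicateRow Unit y = vecMulVec x y := by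
  ext i j; simp [Matrix.mul_apply, vecMulVec_apply]

lemma mul_colU (P : Matrix m m ℝ) (x : m → ℝ) : P * replicateCol Unit x = replicateCol Unit (P *ᵥ x) := by
  ext i j; simp [Matrix.mul_apply, mulVec, dotProduct]

lemma rowU_mul (P : Matrix m m ℝ) (x : m → ℝ) : replicateRow Unit x * P = replicateRow Unit (Pᵀ *ᵥ x) := by
  ext i j; simp [Matrix.mul_apply, mulVec, dotProduct, transpose_apply, mul_comm]

lemma rowU_mul_colU (x y : m → ℝ) :
    replicateRow Unit x * replicateCol Unit y = Matrix.of (fun _ _ : Unit => x ⬝ᵥ y) := by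
  ext i j; simp [Matrix.mul_apply, dotProduct]

lemma mul_vecMulVec (P : Matrix m m ℝ) (x y : m → ℝ) :
    P * vecMulVec x y = vecMulVec (P *ᵥ x) y := by
  ext i j; simp [Matrix.mul_apply, vecMulVec_apply, mulVec, dotProduct, Finset.sum_mul, mul_assoc]

lemma vecMulVec_mulVec (x y z : m → ℝ) : vecMulVec x y *ᵥ z = (y ⬝ᵥ z) • x := by
  funext i
  simp only [vecMulVec_apply, mulVec, dotProduct, Pi.smul_apply, smul_eq_mul, Finset.sum_mul,
    Finset.mul_sum]
  exact Finset.sum_congr rfl fun k _ => by ring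

lemma vecMulVec_transpose' (x y : m → ℝ) : (vecMulVec x y)ᵀ = vecMulVec y x := by
  ext i j; simp [vecMulVec_apply, mul_comm]

lemma unitM_mul_rowU (c : ℝ) (x : m → ℝ) :
    Matrix.of (fun _ _ : Unit => c) * replicateRow Unit x = replicateRow Unit (c • x) := by
  ext i j; simp [Matrix.mul_apply]

lemma colU_mul_unitM (c : ℝ) (x : m → ℝ) :
    replicateCol Unit x * Matrix.of (fun _ _ : Unit => c) = replicateCol Unit (c • x) := by
  ext i j; simp [Matrix.mul_apply, mul_comm]

lemma unitM_mul_unitM (a c : ℝ) :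
    (Matrix.of (fun _ _ : Unit => a)) * (Matrix.of (fun _ _ : Unit => c))
      = Matrix.of (fun _ _ : Unit => a * c) := by
  ext i j; simp [Matrix.mul_apply]

lemma unitM_one : Matrix.of (fun _ _ : Unit => (1 : ℝ)) = (1 : Matrix Unit Unit ℝ) := by
  ext i j; simp [Matrix.one_apply]

lemma colU_add (x y : m → ℝ) : replicateCol Unit x + replicateCol Unit y = replicateCol Unit (x + y) := by
  ext i j; simp

lemma rowU_smul (c : ℝ) (x : m → ℝ) : replicateRow Unit (c • x) = c • replicateRow Unit x := by
  ext i j; simp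

end Helpers

section Block
variable {m : Type*} [Fintype m] [DecidableEq m]

lemma block_key (B : Matrix m m ℝ) (b : m → ℝ) (a : ℝ)
    (hB : B.PosDef) (hBsym : Bᵀ = B)
    (hpd : (fromBlocks B (replicateCol Unit b) (replicateRow Unit b) (Matrix.of fun _ _ => a)).PosDef) :
    0 < a - b ⬝ᵥ (B⁻¹ *ᵥ b) ∧
      (fromBlocks B (replicateCol Unit b) (replicateRow Unit b) (Matrix.of fun _ _ => a))⁻¹ =
        fromBlocks (B⁻¹ + (a - b ⬝ᵥ (B⁻¹ *ᵥ b))⁻¹ • vecMulVec (B⁻¹ *ᵥ b) (B⁻¹ *ᵥ b))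
          (replicateCol Unit ((-(a - b ⬝ᵥ (B⁻¹ *ᵥ b))⁻¹) • (B⁻¹ *ᵥ b)))
          (replicateRow Unit ((-(a - b ⬝ᵥ (B⁻¹ *ᵥ b))⁻¹) • (B⁻¹ *ᵥ b)))
          (Matrix.of fun _ _ => (a - b ⬝ᵥ (B⁻¹ *ᵥ b))⁻¹) := by
  have hBI : B * B⁻¹ = 1 := Matrix.mul_nonsing_inv B hB.det_pos.ne'.isUnit
  set u := B⁻¹ *ᵥ b with hu
  set s := a - b ⬝ᵥ u with hs
  have hBu : B *ᵥ u = b := by rw [hu, mulVec_mulVec, hBI, one_mulVec]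
  have hub : u ⬝ᵥ b = b ⬝ᵥ u := dotProduct_comm u b
  have hBinvT : B⁻¹ᵀ = B⁻¹ := by rw [transpose_nonsing_inv, hBsym]
  have hspos : 0 < s := by
    have hx : (Sum.elim (-u) (fun _ => (1:ℝ)) : m ⊕ Unit → ℝ) ≠ 0 := by
      intro h; have := congrFun h (Sum.inr ()); simp at this
    have h2 := hpd.dotProduct_mulVec_pos hx
    rw [star_trivial, fromBlocks_mulVec] at h2
    simp only [Sum.elim_comp_inl, Sum.elim_comp_inr] at h2
    have e1 : (replicateCol Unit b) *ᵥ (fun _ => (1:ℝ)) = b := by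
      funext i; simp [mulVec, dotProduct]
    have e3 : (Matrix.of fun _ _ : Unit => a) *ᵥ (fun _ => (1:ℝ)) = fun _ : Unit => a := by
      funext i; simp [mulVec, dotProduct]
    rw [e1, e3, mulVec_neg, hBu, neg_add_cancel, sumElim_dotProduct_sumElim,
      dotProduct_zero] at h2
    simp only [dotProduct, Finset.univ_unique, Finset.sum_singleton, Pi.add_apply,
      one_mul] at h2
    have e2 : (replicateRow Unit b *ᵥ -u) (default : Unit) = -(b ⬝ᵥ u) := by
      simp [mulVec, dotProduct]
    rw [zero_add, e2] at h2
    rw [hs]; linarith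
  have hsne : s ≠ 0 := hspos.ne'
  refine ⟨hspos, ?_⟩
  apply inv_eq_right_inv
  rw [fromBlocks_multiply]
  have hW : B * (B⁻¹ + s⁻¹ • vecMulVec u u) + replicateCol Unit b * replicateRow Unit ((-s⁻¹) • u) = 1 := by
    rw [mul_add, hBI, Matrix.mul_smul, _root_.mul_vecMulVec, hBu, colU_mul_rowU]
    have h3 : vecMulVec b ((-s⁻¹) • u) = (-s⁻¹) • vecMulVec b u := by
      ext i j; simp only [vecMulVec_apply, Pi.smul_apply, smul_eq_mul, Matrix.smul_apply]; ring
    rw [h3]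
    have h4 : (s⁻¹ • vecMulVec b u) + (-s⁻¹) • vecMulVec b u = 0 := by
      rw [neg_smul, add_neg_cancel]
    rw [add_assoc, h4, add_zero]
  have hX : B * replicateCol Unit ((-s⁻¹) • u) + replicateCol Unit b * (Matrix.of fun _ _ : Unit => s⁻¹) = 0 := by
    rw [mul_colU, colU_mul_unitM, colU_add, mulVec_smul, hBu]
    have h3 : (-s⁻¹) • b + s⁻¹ • b = 0 := by rw [neg_smul, neg_add_cancel]
    rw [h3]
    ext i j; simp
  have hY : replicateRow Unit b * (B⁻¹ + s⁻¹ • vecMulVec u u) +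
      (Matrix.of fun _ _ : Unit => a) * replicateRow Unit ((-s⁻¹) • u) = 0 := by
    rw [Matrix.mul_add, rowU_mul, hBinvT, Matrix.mul_smul, rowU_mul, vecMulVec_transpose',
      _root_.vecMulVec_mulVec, unitM_mul_rowU]
    have hc : 1 + s⁻¹ * (u ⬝ᵥ b) - a * s⁻¹ = 0 := by
      have h1 : s⁻¹ * s = 1 := inv_mul_cancel₀ hsne
      rw [hs] at h1
      rw [hub]
      linear_combination -h1
    ext i j
    rw [← hu]
    simp only [Matrix.add_apply, Matrix.smul_apply, replicateRow_apply, Pi.smul_apply, smul_eq_mul,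
      Matrix.zero_apply]
    linear_combination (u j) * hc
  have hZ : replicateRow Unit b * replicateCol Unit ((-s⁻¹) • u) +
      (Matrix.of fun _ _ : Unit => a) * (Matrix.of fun _ _ : Unit => s⁻¹) = 1 := by
    rw [rowU_mul_colU, unitM_mul_unitM]
    ext i j
    have hij : i = j := Subsingleton.elim i j
    subst hij
    rw [Matrix.add_apply, Matrix.of_apply, Matrix.of_apply, Matrix.one_apply_eq]
    have h1 : s⁻¹ * s = 1 := inv_mul_cancel₀ hsne
    rw [hs] at h1
    have h5 : b ⬝ᵥ ((-s⁻¹) • u) = (-s⁻¹) * (b ⬝ᵥ u) := by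
      simp [dotProduct, Finset.mul_sum]
      exact Finset.sum_congr rfl fun k _ => by ring
    rw [h5]
    linear_combination h1
  rw [hW, hX, hY, hZ, fromBlocks_one]

end Block

section Transfer
variable {N : Type*} [Fintype N] [DecidableEq N] {m : Type*} [Fintype m] [DecidableEq m]

lemma posdef_submatrix_inj (A : Matrix N N ℝ) (hA : A.PosDef) (f : m → N)
    (hf : Function.Injective f) : (A.submatrix f f).PosDef := by
  refine Matrix.PosDef.of_dotProduct_mulVec_pos ?_ ?_
  · exact hA.1.submatrix f
  · intro x hx
    set y : N → ℝ := fun j => ∑ k : m, if f k = j then x k else 0 with hy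
    have hyf : ∀ k, y (f k) = x k := by
      intro k
      simp only [hy]
      rw [Finset.sum_eq_single k]
      · simp
      · intro k' _ hk'; rw [if_neg (fun h => hk' (hf h))]
      · intro h; exact absurd (Finset.mem_univ k) h
    have hsum : ∀ c : N → ℝ, (∑ j, y j * c j) = ∑ k, x k * c (f k) := by
      intro c
      simp only [hy, Finset.sum_mul]
      rw [Finset.sum_comm]
      refine Finset.sum_congr rfl fun k _ => ?_
      rw [Finset.sum_eq_single (f k)]
      · simp
      · intro j _ hj; rw [if_neg (fun h => hj h.symm), zero_mul]
      · intro h; exact absurd (Finset.mem_univ (f k)) h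
    have hy0 : y ≠ 0 := by
      obtain ⟨k, hk⟩ := Function.ne_iff.1 hx
      intro h
      apply hk
      have := congrFun h (f k)
      rw [hyf k] at this
      simpa using this
    have hq := hA.dotProduct_mulVec_pos hy0
    have hgoal : (∑ j, y j * ∑ l, A j l * y l) = ∑ k, x k * ∑ k', A (f k) (f k') * x k' := by
      rw [hsum (fun j => ∑ l, A j l * y l)]
      refine Finset.sum_congr rfl fun k _ => ?_
      congr 1
      rw [show (∑ l, A (f k) l * y l) = ∑ l, y l * A (f k) l from
        Finset.sum_congr rfl fun l _ => mul_comm _ _, hsum (fun l => A (f k) l)]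
      exact Finset.sum_congr rfl fun k' _ => mul_comm _ _
    simp only [star_trivial, dotProduct, mulVec, submatrix_apply] at hq ⊢
    rw [← hgoal]
    exact hq

lemma trace_submatrix_equiv' {l : Type*} [Fintype l] (X : Matrix m m ℝ) (e : l ≃ m) :
    (X.submatrix e e).trace = X.trace := by
  simp only [Matrix.trace, Matrix.diag, submatrix_apply]
  exact Fintype.sum_equiv e _ _ fun i => rfl

lemma trace_fromBlocks' (P : Matrix m m ℝ) (X : Matrix m Unit ℝ) (Y : Matrix Unit m ℝ)
    (Q : Matrix Unit Unit ℝ) : (fromBlocks P X Y Q).trace = P.trace + Q.trace := by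
  simp [Matrix.trace, Matrix.diag, Fintype.sum_sum_type]

lemma trace_vecMulVec (u : m → ℝ) : (vecMulVec u u).trace = u ⬝ᵥ u := by
  simp [Matrix.trace, Matrix.diag, vecMulVec_apply, dotProduct]

end Transfer


section Main
variable {n : ℕ} (A : Matrix (Fin n) (Fin n) ℝ)

/-- padded inverse of the principal submatrix -/
noncomputable def pInv (K : Finset (Fin n)) (j k : Fin n) : ℝ :=
  if h : j ∈ K ∧ k ∈ K then (principalSub A K)⁻¹ ⟨j, h.1⟩ ⟨k, h.2⟩ else 0

noncomputable def Dfun (K : Finset (Fin n)) (i : Fin n) : ℝ :=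
  A i i - ∑ j, ∑ k, A j i * A k i * pInv A K j k

noncomputable def Qfun (K : Finset (Fin n)) (i : Fin n) : ℝ :=
  ∑ k, (∑ j, pInv A K k j * A j i) ^ 2

variable (hsym : A.IsSymm) (hpd : A.PosDef) (hoff : ∀ i j, i ≠ j → A i j ≤ 0)

include hpd in
lemma psub_posDef (K : Finset (Fin n)) : (principalSub A K).PosDef :=
  posdef_submatrix_inj A hpd Subtype.val Subtype.val_injective

include hsym in
lemma psub_sym (K : Finset (Fin n)) : (principalSub A K)ᵀ = principalSub A K := by
  ext x y
  simp only [transpose_apply, principalSub, submatrix_apply]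
  exact hsym.apply _ _

include hoff in
lemma psub_off (K : Finset (Fin n)) (x y : {i : Fin n // i ∈ K}) (hxy : x ≠ y) :
    principalSub A K x y ≤ 0 :=
  hoff _ _ (fun h => hxy (Subtype.ext h))

include hpd hoff in
lemma pInv_nonneg (K : Finset (Fin n)) (j k : Fin n) : 0 ≤ pInv A K j k := by
  unfold pInv
  split
  · exact Mmat_inv_nonneg _ (psub_posDef A hpd K) (psub_off A hoff K) _ _
  · exact le_refl 0

/-- the equiv between the block index and `insert i S` -/
def insEquiv (S : Finset (Fin n)) (i : Fin n) (hi : i ∉ S) :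
    ({x : Fin n // x ∈ S} ⊕ Unit) ≃ {x : Fin n // x ∈ insert i S} where
  toFun := Sum.elim (fun j => ⟨j.1, Finset.mem_insert_of_mem j.2⟩)
    (fun _ => ⟨i, Finset.mem_insert_self i S⟩)
  invFun := fun x => if h : x.1 ∈ S then Sum.inl ⟨x.1, h⟩ else Sum.inr ()
  left_inv := by
    rintro (⟨j, hj⟩ | ⟨⟩)
    · simp [hj]
    · simp [hi]
  right_inv := by
    rintro ⟨x, hx⟩
    by_cases h : x ∈ S
    · simp [h]
    · have hxi : x = i := by
        rcases Finset.mem_insert.1 hx with h1 | h1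
        · exact h1
        · exact absurd h1 h
      subst hxi
      simp [h]

include hsym hpd hoff in
lemma step {S : Finset (Fin n)} {i : Fin n} (hi : i ∉ S) :
    0 < Dfun A S i ∧
    Matrix.trace ((principalSub A (insert i S))⁻¹)
      = Matrix.trace ((principalSub A S)⁻¹) + (1 + Qfun A S i) / Dfun A S i ∧
    ∀ j k, pInv A S j k ≤ pInv A (insert i S) j k := by
  classical
  set B := principalSub A S with hB
  set b : {x : Fin n // x ∈ S} → ℝ := fun j => A j.1 i with hbdef
  set a := A i i with hadef
  set e := insEquiv S i hi with he
  have hEq : (principalSub A (insert i S)).submatrix (⇑e) (⇑e)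
      = fromBlocks B (replicateCol Unit b) (replicateRow Unit b) (Matrix.of fun _ _ => a) := by
    ext x y
    cases x with
    | inl x =>
      cases y with
      | inl y => rfl
      | inr y => rfl
    | inr x =>
      cases y with
      | inl y =>
        show A i y.1 = A y.1 i
        exact hsym.apply y.1 i
      | inr y => rfl
  have hBpd : B.PosDef := psub_posDef A hpd S
  have hBsym : Bᵀ = B := psub_sym A hsym S
  have hMbpd : (fromBlocks B (replicateCol Unit b) (replicateRow Unit b) (Matrix.of fun _ _ => a)).PosDef := by
    rw [← hEq]
    have h2 : (principalSub A (insert i S)).submatrix (⇑e) (⇑e)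
        = A.submatrix (Subtype.val ∘ ⇑e) (Subtype.val ∘ ⇑e) := by
      simp [principalSub, submatrix_submatrix]
    rw [h2]
    exact posdef_submatrix_inj A hpd _ (Subtype.val_injective.comp e.injective)
  obtain ⟨hspos, hinv⟩ := block_key B b a hBpd hBsym hMbpd
  set u := B⁻¹ *ᵥ b with hu
  set s := a - b ⬝ᵥ u with hs
  have hsne : s ≠ 0 := hspos.ne'
  have hp0 : ∀ j k, (j ∉ S ∨ k ∉ S) → pInv A S j k = 0 := by
    intro j k hjk
    unfold pInv
    rw [dif_neg (by tauto)]
  have hpB : ∀ (j k : {x : Fin n // x ∈ S}), pInv A S j.1 k.1 = B⁻¹ j k := by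
    intro j k
    unfold pInv
    rw [dif_pos ⟨j.2, k.2⟩]
  have hDsum : (∑ j : Fin n, ∑ k : Fin n, A j i * A k i * pInv A S j k) = b ⬝ᵥ u := by
    have h2 : ∀ j : Fin n, (∑ k : Fin n, A j i * A k i * pInv A S j k)
        = ∑ k ∈ S, A j i * A k i * pInv A S j k :=
      fun j => (Finset.sum_subset (Finset.subset_univ S) (fun k _ hk => by
        rw [hp0 j k (Or.inr hk), mul_zero])).symm
    calc (∑ j : Fin n, ∑ k : Fin n, A j i * A k i * pInv A S j k)
        = ∑ j ∈ S, ∑ k : Fin n, A j i * A k i * pInv A S j k :=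
          (Finset.sum_subset (Finset.subset_univ S) (fun j _ hj =>
            Finset.sum_eq_zero fun k _ => by rw [hp0 j k (Or.inl hj), mul_zero])).symm
      _ = ∑ j ∈ S, ∑ k ∈ S, A j i * A k i * pInv A S j k :=
          Finset.sum_congr rfl fun j _ => h2 j
      _ = ∑ j : {x : Fin n // x ∈ S}, ∑ k : {x : Fin n // x ∈ S},
            A j.1 i * A k.1 i * pInv A S j.1 k.1 := by
          rw [← Finset.sum_coe_sort S (fun j => ∑ k ∈ S, A j i * A k i * pInv A S j k)]
          exact Finset.sum_congr rfl fun j _ =>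
            (Finset.sum_coe_sort S (fun k => A j.1 i * A k i * pInv A S j.1 k)).symm
      _ = b ⬝ᵥ u := by
          simp only [hpB, hu, dotProduct, mulVec, hbdef, Finset.mul_sum]
          exact Finset.sum_congr rfl fun j _ => Finset.sum_congr rfl fun k _ => by ring
  have hD : Dfun A S i = s := by
    unfold Dfun
    rw [hDsum, hs, hadef]
  have hQsum : Qfun A S i = u ⬝ᵥ u := by
    unfold Qfun
    have hval : ∀ k : {x : Fin n // x ∈ S}, (∑ j : Fin n, pInv A S k.1 j * A j i) = u k := by
      intro k
      rw [← Finset.sum_subset (Finset.subset_univ S) (fun j _ hj => by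
        rw [hp0 k.1 j (Or.inr hj), zero_mul]),
        ← Finset.sum_coe_sort S (fun j => pInv A S k.1 j * A j i)]
      simp only [hpB, hu, mulVec, dotProduct, hbdef]
    calc (∑ k : Fin n, (∑ j : Fin n, pInv A S k j * A j i) ^ 2)
        = ∑ k ∈ S, (∑ j : Fin n, pInv A S k j * A j i) ^ 2 :=
          (Finset.sum_subset (Finset.subset_univ S) (fun k _ hk => by
            rw [Finset.sum_eq_zero fun j _ => by rw [hp0 k j (Or.inl hk), zero_mul]]
            norm_num)).symm
      _ = ∑ k : {x : Fin n // x ∈ S}, (∑ j : Fin n, pInv A S k.1 j * A j i) ^ 2 :=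
          (Finset.sum_coe_sort S (fun k => (∑ j : Fin n, pInv A S k j * A j i) ^ 2)).symm
      _ = u ⬝ᵥ u := by
          simp only [hval]
          simp [dotProduct, sq]
  have hMinv : ((principalSub A (insert i S))⁻¹).submatrix (⇑e) (⇑e)
      = fromBlocks (B⁻¹ + s⁻¹ • vecMulVec u u) (replicateCol Unit ((-s⁻¹) • u))
        (replicateRow Unit ((-s⁻¹) • u)) (Matrix.of fun _ _ => s⁻¹) := by
    rw [← inv_submatrix_equiv (principalSub A (insert i S)) e e, hEq, hinv]
  have htr : Matrix.trace ((principalSub A (insert i S))⁻¹)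
      = Matrix.trace (B⁻¹) + s⁻¹ * (u ⬝ᵥ u) + s⁻¹ := by
    rw [← trace_submatrix_equiv' ((principalSub A (insert i S))⁻¹) e, hMinv, trace_fromBlocks',
      trace_add, trace_smul, _root_.trace_vecMulVec]
    have h3 : Matrix.trace (Matrix.of fun _ _ : Unit => s⁻¹) = s⁻¹ := by
      simp [Matrix.trace, Matrix.diag]
    rw [h3]
    simp [smul_eq_mul]
  have hun : ∀ j, u j ≤ 0 := by
    intro j
    rw [hu]
    apply Finset.sum_nonpos
    intro k _
    have h1 : 0 ≤ B⁻¹ j k := Mmat_inv_nonneg _ hBpd (psub_off A hoff S) j k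
    have h2 : b k ≤ 0 := hoff k.1 i (fun h => hi (h ▸ k.2))
    exact mul_nonpos_of_nonneg_of_nonpos h1 h2
  have hs0 : 0 ≤ s⁻¹ := le_of_lt (inv_pos.2 hspos)
  have hmono : ∀ j k, pInv A S j k ≤ pInv A (insert i S) j k := by
    intro j k
    by_cases hjk : j ∈ S ∧ k ∈ S
    · have hj' : j ∈ insert i S := Finset.mem_insert_of_mem hjk.1
      have hk' : k ∈ insert i S := Finset.mem_insert_of_mem hjk.2
      have hL : pInv A S j k = B⁻¹ ⟨j, hjk.1⟩ ⟨k, hjk.2⟩ := by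
        unfold pInv; rw [dif_pos hjk]
      have hR : pInv A (insert i S) j k
          = B⁻¹ ⟨j, hjk.1⟩ ⟨k, hjk.2⟩ + s⁻¹ * (u ⟨j, hjk.1⟩ * u ⟨k, hjk.2⟩) := by
        unfold pInv
        rw [dif_pos ⟨hj', hk'⟩]
        have h4 := congrFun (congrFun hMinv (Sum.inl ⟨j, hjk.1⟩)) (Sum.inl ⟨k, hjk.2⟩)
        simp only [submatrix_apply] at h4
        rw [show ((principalSub A (insert i S))⁻¹ ⟨j, hj'⟩ ⟨k, hk'⟩ : ℝ)
            = (principalSub A (insert i S))⁻¹ (e (Sum.inl ⟨j, hjk.1⟩))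
              (e (Sum.inl ⟨k, hjk.2⟩)) from rfl, h4]
        simp [vecMulVec_apply]
      rw [hL, hR]
      have huu : 0 ≤ u ⟨j, hjk.1⟩ * u ⟨k, hjk.2⟩ := by
        nlinarith [hun ⟨j, hjk.1⟩, hun ⟨k, hjk.2⟩]
      nlinarith [mul_nonneg hs0 huu]
    · rw [hp0 j k (by tauto)]
      exact pInv_nonneg A hpd hoff _ j k
  refine ⟨by rw [hD]; exact hspos, ?_, hmono⟩
  rw [htr, hQsum, hD, hB, div_eq_mul_inv]
  ring

lemma pInv_eq_zero (K : Finset (Fin n)) {j k : Fin n} (h : j ∉ K ∨ k ∉ K) :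
    pInv A K j k = 0 := by
  unfold pInv
  rw [dif_neg (by tauto)]

include hsym hpd hoff in
lemma pInv_mono {S T : Finset (Fin n)} (hST : S ⊆ T) (j k : Fin n) :
    pInv A S j k ≤ pInv A T j k := by
  classical
  have key : ∀ U : Finset (Fin n), ∀ S : Finset (Fin n), Disjoint U S →
      ∀ j k, pInv A S j k ≤ pInv A (S ∪ U) j k := by
    intro U
    induction U using Finset.induction_on with
    | empty => intro S _ j k; simp
    | @insert a U ha ih =>
      intro S hdisj j k
      have hdU : Disjoint U S := (Finset.disjoint_insert_left.1 hdisj).2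
      have haS : a ∉ S := (Finset.disjoint_insert_left.1 hdisj).1
      have haSU : a ∉ S ∪ U := by
        intro h
        rcases Finset.mem_union.1 h with h | h
        · exact haS h
        · exact ha h
      calc pInv A S j k ≤ pInv A (S ∪ U) j k := ih S hdU j k
        _ ≤ pInv A (insert a (S ∪ U)) j k := (step A hsym hpd hoff haSU).2.2 j k
        _ = pInv A (S ∪ insert a U) j k := by rw [Finset.union_insert]
  have hT : T = S ∪ (T \ S) := (Finset.union_sdiff_of_subset hST).symm
  rw [hT]
  exact key (T \ S) S Finset.sdiff_disjoint j k

include hoff in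
lemma offdiag_nonneg_prod {j k i : Fin n} (hj : j ≠ i) (hk : k ≠ i) : 0 ≤ A j i * A k i := by
  nlinarith [hoff j i hj, hoff k i hk]

include hsym hpd hoff in
lemma Dfun_mono {S T : Finset (Fin n)} (hST : S ⊆ T) {i : Fin n} (hiT : i ∉ T) :
    Dfun A T i ≤ Dfun A S i := by
  unfold Dfun
  have hiS : i ∉ S := fun h => hiT (hST h)
  apply sub_le_sub_left
  apply Finset.sum_le_sum; intro j _
  apply Finset.sum_le_sum; intro k _
  by_cases hj : j = i
  · subst hj
    rw [pInv_eq_zero A S (Or.inl hiS), pInv_eq_zero A T (Or.inl hiT)]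
  · by_cases hk : k = i
    · subst hk
      rw [pInv_eq_zero A S (Or.inr hiS), pInv_eq_zero A T (Or.inr hiT)]
    · exact mul_le_mul_of_nonneg_left (pInv_mono A hsym hpd hoff hST j k)
        (offdiag_nonneg_prod A hoff hj hk)

lemma Qfun_nonneg (S : Finset (Fin n)) (i : Fin n) : 0 ≤ Qfun A S i :=
  Finset.sum_nonneg fun _ _ => sq_nonneg _

include hsym hpd hoff in
lemma Qfun_mono {S T : Finset (Fin n)} (hST : S ⊆ T) {i : Fin n} (hiT : i ∉ T) :
    Qfun A S i ≤ Qfun A T i := by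
  unfold Qfun
  have hiS : i ∉ S := fun h => hiT (hST h)
  apply Finset.sum_le_sum; intro k _
  set x := ∑ j, pInv A S k j * A j i with hx
  set y := ∑ j, pInv A T k j * A j i with hy
  have hyx : y ≤ x := by
    rw [hx, hy]
    apply Finset.sum_le_sum; intro j _
    by_cases hj : j = i
    · subst hj
      rw [pInv_eq_zero A S (Or.inr hiS), pInv_eq_zero A T (Or.inr hiT)]
    · exact mul_le_mul_of_nonpos_right (pInv_mono A hsym hpd hoff hST k j) (hoff j i hj)
  have hx0 : x ≤ 0 := by
    rw [hx]
    apply Finset.sum_nonpos; intro j _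
    by_cases hj : j = i
    · subst hj
      rw [pInv_eq_zero A S (Or.inr hiS), zero_mul]
    · exact mul_nonpos_of_nonneg_of_nonpos (pInv_nonneg A hpd hoff S k j) (hoff j i hj)
  nlinarith [mul_nonneg (sub_nonneg.2 hyx) (neg_nonneg.2 (by linarith : x + y ≤ 0))]

include hsym hpd hoff in
lemma tele : ∀ (U S T : Finset (Fin n)), S ⊆ T → Disjoint U T →
    Matrix.trace ((principalSub A (S ∪ U))⁻¹) - Matrix.trace ((principalSub A S)⁻¹)
      ≤ Matrix.trace ((principalSub A (T ∪ U))⁻¹) - Matrix.trace ((principalSub A T)⁻¹) := by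
  intro U
  induction U using Finset.induction_on with
  | empty =>
    intro S T _ _
    rw [Finset.union_empty, Finset.union_empty]
    simp
  | @insert a U ha ih =>
    intro S T hST hdisj
    have haT : a ∉ T := (Finset.disjoint_insert_left.1 hdisj).1
    have hdU : Disjoint U T := (Finset.disjoint_insert_left.1 hdisj).2
    have haS : a ∉ S ∪ U := by
      intro h
      rcases Finset.mem_union.1 h with h | h
      · exact haT (hST h)
      · exact ha h
    have haTU : a ∉ T ∪ U := by
      intro h
      rcases Finset.mem_union.1 h with h | h
      · exact haT h
      · exact ha h
    have hsub : S ∪ U ⊆ T ∪ U := Finset.union_subset_union hST Finset.Subset.rfl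
    have h1 := (step A hsym hpd hoff haS).2.1
    have h2 := (step A hsym hpd hoff haTU).2.1
    have hDT := (step A hsym hpd hoff haTU).1
    have hmD := Dfun_mono A hsym hpd hoff hsub haTU
    have hmQ := Qfun_mono A hsym hpd hoff hsub haTU
    have hfrac : (1 + Qfun A (S ∪ U) a) / Dfun A (S ∪ U) a
        ≤ (1 + Qfun A (T ∪ U) a) / Dfun A (T ∪ U) a :=
      div_le_div₀ (by linarith [Qfun_nonneg A (T ∪ U) a]) (by linarith) hDT hmD
    have ihh := ih S T hST hdU
    rw [Finset.union_insert, Finset.union_insert, h1, h2]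
    linarith

end Main

/-- For a symmetric M-matrix `A` (positive definite with nonpositive off-diagonal
entries), the set function `K ↦ Tr(A[K]⁻¹)` is supermodular. -/
theorem trace_inv_principalSub_supermodular {n : ℕ}
    (A : Matrix (Fin n) (Fin n) ℝ)
    (hsym : A.IsSymm) (hpd : A.PosDef)
    (hoff : ∀ i j, i ≠ j → A i j ≤ 0)
    (J K : Finset (Fin n)) :
    Matrix.trace ((principalSub A K)⁻¹) + Matrix.trace ((principalSub A J)⁻¹)
      ≤ Matrix.trace ((principalSub A (K ∪ J))⁻¹)
        + Matrix.trace ((principalSub A (K ∩ J))⁻¹) := by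
  classical
  have h := tele A hsym hpd hoff (J \ K) (K ∩ J) K Finset.inter_subset_left
    Finset.sdiff_disjoint
  have e1 : (K ∩ J) ∪ (J \ K) = J := by
    rw [Finset.inter_comm, Finset.union_comm]
    exact Finset.sdiff_union_inter J K
  have e2 : K ∪ (J \ K) = K ∪ J := Finset.union_sdiff_self_eq_union
  rw [e1, e2] at h
  linarith
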